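/- If P is a K-projective complex in an abelian category 𝓜, then for every complex M the localization map Hom_{K(𝓜)}(P, M) → Hom_{D(𝓜)}(P, M) is bijective. -/

import Mathlib

open CategoryTheory Limits CochainComplex

open CategoryTheory.Pretriangulated in
/-- If `P` is a K-projective complex in an abelian category `𝓜` (i.e.
`Hom(P, N)` is acyclic for every acyclic `N`), then for every complex `M` the map
`Hom_{K(𝓜)}(P, M) → Hom_{D(𝓜)}(P, M)` induced by the localization functor `Qh` is
bijective. -/
theorem K_projective_localization_hom_bijective
    {𝓜 : Type*} [Category 𝓜] [Abelian 𝓜] [HasDerivedCategory 𝓜]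
    (P : CochainComplex 𝓜 ℤ)
    (hP : ∀ N : CochainComplex 𝓜 ℤ, (∀ i, N.ExactAt i) →
      ∀ i, (HomComplex P N).ExactAt i)
    (M : CochainComplex 𝓜 ℤ) :
    Function.Bijective
      (fun f : (HomotopyCategory.quotient 𝓜 (ComplexShape.up ℤ)).obj P ⟶
          (HomotopyCategory.quotient 𝓜 (ComplexShape.up ℤ)).obj M =>
        DerivedCategory.Qh.map f) := by
  set Qk := HomotopyCategory.quotient 𝓜 (ComplexShape.up ℤ) with hQk
  set S := HomotopyCategory.subcategoryAcyclic 𝓜 with hS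
  -- Step 0: `Hom(P, Z) = 0` for every acyclic `Z` in the homotopy category.
  have hzero : ∀ (Z : HomotopyCategory 𝓜 (ComplexShape.up ℤ)), S Z →
      ∀ (g : Qk.obj P ⟶ Z), g = 0 := by
    rintro ⟨N⟩ hZ g
    have hN : ∀ i, N.ExactAt i := by
      rwa [← HomotopyCategory.quotient_obj_mem_subcategoryAcyclic_iff_exactAt]
    obtain ⟨f, rfl⟩ := Qk.map_surjective g
    have hhomot : Nonempty (Homotopy f 0) := by
      have hex := hP N hN 0
      rw [HomologicalComplex.exactAt_iff' _ (-1) 0 1 (by simp) (by simp),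
        ShortComplex.ab_exact_iff] at hex
      obtain ⟨y, hy⟩ := hex (HomComplex.Cochain.ofHom f) (by
        show HomComplex.δ 0 1 (HomComplex.Cochain.ofHom f) = 0
        simp)
      refine ⟨(HomComplex.Cochain.equivHomotopy f 0).symm ⟨y, ?_⟩⟩
      have hy' : HomComplex.δ (-1) 0 y = HomComplex.Cochain.ofHom f := hy
      simp [hy']
    change Qk.map f = (0 : Qk.obj P ⟶ Qk.obj N)
    rw [show (0 : Qk.obj P ⟶ Qk.obj N) = Qk.map 0 by simp [hQk]]
    exact HomotopyCategory.eq_of_homotopy _ _ hhomot.some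
  -- Step 1: postcomposition with a morphism in `S.W` is bijective on `Hom(P, -)`.
  have hbij : ∀ {X Y : HomotopyCategory 𝓜 (ComplexShape.up ℤ)} (s : X ⟶ Y), S.trW s →
      Function.Bijective (fun a : Qk.obj P ⟶ X => a ≫ s) := by
    intro X Y s hs
    obtain ⟨Z, g, h, hT, hZ⟩ := hs
    constructor
    · intro a₁ a₂ hq
      simp only at hq
      have key : ∀ a : Qk.obj P ⟶ X, a ≫ s = 0 → a = 0 := by
        intro a ha
        obtain ⟨b, hb⟩ := Triangle.coyoneda_exact₂ _ (inv_rot_of_distTriang _ hT) a ha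
        rw [hb, hzero _ (S.le_shift (-1) Z hZ) b]; exact zero_comp
      have := key (a₁ - a₂) (by rw [Preadditive.sub_comp, hq, sub_self])
      rwa [sub_eq_zero] at this
    · intro b
      obtain ⟨a, ha⟩ := Triangle.coyoneda_exact₂ _ hT b (hzero Z hZ _)
      exact ⟨a, ha.symm⟩
  -- Step 2: combine, using the left calculus of fractions for `S.W`.
  have : DerivedCategory.Qh.IsLocalization S.trW := by
    rw [hS]; infer_instance
  constructor
  · intro f₁ f₂ hf
    simp only at hf
    rw [MorphismProperty.map_eq_iff_postcomp DerivedCategory.Qh S.trW] at hf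
    obtain ⟨Z, t, ht, eq⟩ := hf
    exact (hbij t ht).1 eq
  · intro φ
    obtain ⟨ψ, hψ⟩ := Localization.exists_leftFraction DerivedCategory.Qh S.trW φ
    obtain ⟨a, ha⟩ := (hbij ψ.s ψ.hs).2 ψ.f
    simp only at ha
    refine ⟨a, ?_⟩
    have : IsIso (DerivedCategory.Qh.map ψ.s) :=
      Localization.inverts DerivedCategory.Qh S.trW ψ.s ψ.hs
    rw [hψ, MorphismProperty.LeftFraction.map, ← cancel_mono (DerivedCategory.Qh.map ψ.s)]
    simp only [Category.assoc, IsIso.inv_hom_id, Category.comp_id,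
      ← DerivedCategory.Qh.map_comp, ha]
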